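/- Let g, N, T₀, p₀, c_p, R_d be positive real constants and set H = g/N², α = gH/(c_p T₀). Define the environmental temperature T̃(z) = T₀(α − (α−1)e^{z/H}), pressure p̃(z) = p₀ exp((c_p/R_d)(ln(T̃(z)/T₀) − z/H)), and density ρ̃(z) = p̃(z)/(R_d T̃(z)). Then at every z with T̃(z) > 0 the atmosphere is in hydrostatic balance: p̃ is differentiable at z and p̃′(z) = −ρ̃(z) g. -/

import Mathlib

/-- The environmental atmosphere of the inertia gravity test case, with constant
Brunt–Väisälä frequency, is in hydrostatic balance: p̃′(z) = −ρ̃(z) g wherever T̃(z) > 0. -/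
theorem stmt_11 (g N T₀ p₀ cp Rd : ℝ)
    (hg : 0 < g) (hN : 0 < N) (hT₀ : 0 < T₀) (hp₀ : 0 < p₀)
    (hcp : 0 < cp) (hRd : 0 < Rd)
    (H α : ℝ) (hH : H = g / N^2) (hα : α = g * H / (cp * T₀))
    (T p ρ : ℝ → ℝ)
    (hT : ∀ z, T z = T₀ * (α - (α - 1) * Real.exp (z / H)))
    (hp : ∀ z, p z = p₀ * Real.exp ((cp / Rd) * (Real.log (T z / T₀) - z / H)))
    (hρ : ∀ z, ρ z = p z / (Rd * T z)) :
    ∀ z, 0 < T z → HasDerivAt p (-(ρ z) * g) z := by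
  intro z hTz
  have hHpos : 0 < H := by rw [hH]; positivity
  have hH0 : H ≠ 0 := hHpos.ne'
  have hT0' : T₀ ≠ 0 := hT₀.ne'
  have hTz0 : T z ≠ 0 := hTz.ne'
  have h1 : HasDerivAt (fun z : ℝ => z / H) (1 / H) z := (hasDerivAt_id z).div_const H
  have hexp : HasDerivAt (fun z : ℝ => Real.exp (z / H)) (Real.exp (z / H) * (1 / H)) z :=
    h1.exp
  set D : ℝ := T₀ * (0 - (α - 1) * (Real.exp (z / H) * (1 / H))) with hD
  have hTfun : T = fun z => T₀ * (α - (α - 1) * Real.exp (z / H)) := funext hT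
  have hTd : HasDerivAt T D z := by
    rw [hTfun]
    exact ((hasDerivAt_const z α).sub (hexp.const_mul (α - 1))).const_mul T₀
  have hlog : HasDerivAt (fun z => Real.log (T z / T₀)) ((D / T₀) / (T z / T₀)) z :=
    (hTd.div_const T₀).log (by positivity)
  have hinner : HasDerivAt (fun z => (cp / Rd) * (Real.log (T z / T₀) - z / H))
      ((cp / Rd) * ((D / T₀) / (T z / T₀) - 1 / H)) z := (hlog.sub h1).const_mul (cp / Rd)
  have hfull : HasDerivAt (fun z => p₀ * Real.exp ((cp / Rd) * (Real.log (T z / T₀) - z / H)))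
      (p₀ * (Real.exp ((cp / Rd) * (Real.log (T z / T₀) - z / H)) *
        ((cp / Rd) * ((D / T₀) / (T z / T₀) - 1 / H)))) z := hinner.exp.const_mul p₀
  have hpfun : p = fun z => p₀ * Real.exp ((cp / Rd) * (Real.log (T z / T₀) - z / H)) :=
    funext hp
  rw [hpfun]
  convert hfull using 1
  have hkey : cp * D = cp * T z / H - g := by
    rw [hD, hT z, hα]
    field_simp
    ring
  rw [hρ, hp z]
  have h2 : (cp / Rd) * ((D / T₀) / (T z / T₀) - 1 / H) = -g / (Rd * T z) := by
    have hDT : D / T₀ / (T z / T₀) = D / T z := by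
      rw [div_div_div_eq, mul_comm T₀ (T z), mul_div_mul_right _ _ hT0']
    have hDval : D = T z / H - g / cp := by
      field_simp at hkey ⊢
      linarith
    rw [hDT, hDval]
    field_simp
    ring
  rw [h2]
  field_simp
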